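/- arXiv:0804.0526 — 2 statements merged into one kernel-verified Lean document; each statement's English description precedes it below -/
import Mathlib

section
/- Let X ⊆ Y be the set of positive words in a, b (including the identity element) and let Q be the orthogonal projection of ℓ²(Y) onto the closed span of {δ_x : x ∈ X}. Then: (1) for each operator T ∈ {S_a, S_b, S_a*, S_b*}, the operator QT − TQ has rank at most one; and (2) for any finite sequence T₁, …, T_k of operators each belonging to {S_a, S_b, S_a*, S_b*}, the operator Q T_k T_{k−1} ⋯ T₁ Q − (Q T_k Q)(Q T_{k−1} Q) ⋯ (Q T₁ Q) is compact. -/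
noncomputable section

/-- The free group on two generators `a`, `b`. -/
abbrev F2 : Type := FreeGroup (Fin 2)

/-- The subset `Y ⊆ F₂` of elements of the form `aⁿ·w` with `n ∈ ℤ` and `w` a
positive word in `a`, `b`. -/
abbrev Yset : Set F2 :=
  {x : F2 | ∃ (n : ℤ) (w : FreeMonoid (Fin 2)),
    x = FreeGroup.of 0 ^ n * FreeMonoid.lift FreeGroup.of w}

/-- The subset `X ⊆ Y` of positive words in `a`, `b` (including the identity). -/
abbrev Xpos : Set F2 :=
  {x : F2 | ∃ w : FreeMonoid (Fin 2), x = FreeMonoid.lift FreeGroup.of w}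

abbrev l2Y : Type := lp (fun _ : Yset => ℂ) 2

instance : DecidableEq ↥Yset := Classical.decEq _

/-- The standard basis vector δ_y of ℓ²(Y). -/
def δ (y : Yset) : l2Y := lp.single 2 y 1

namespace Stmt15Aux

open FreeGroup List

/-- all-true (positive) letter lists -/
def PosL (l : List (Fin 2 × Bool)) : Prop := ∀ p ∈ l, p.2 = true

lemma posL_nil : PosL [] := by intro p hp; simp at hp

lemma posL_map (l : List (Fin 2)) : PosL (l.map fun i => (i, true)) := by
  intro p hp; obtain ⟨i, _, rfl⟩ := List.mem_map.1 hp; rfl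

lemma reduce_posL {l : List (Fin 2 × Bool)} (h : PosL l) : reduce l = l := by
  induction l with
  | nil => rfl
  | cons x t ih =>
    have hx : x.2 = true := h x (by simp)
    have ht : PosL t := fun p hp => h p (by simp [hp])
    rw [reduce.cons, ih ht]
    cases t with
    | nil => rfl
    | cons y t' =>
      have hy : y.2 = true := h y (by simp)
      simp only []
      rw [if_neg]
      rintro ⟨-, h2⟩
      rw [hx, hy] at h2
      simp at h2

lemma prod_map_of (l : List (Fin 2)) :
    ((l.map (FreeGroup.of : Fin 2 → F2)).prod) = FreeGroup.mk (l.map fun i => (i, true)) := by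
  induction l with
  | nil => simp [FreeGroup.one_eq_mk]
  | cons x t ih =>
    simp only [List.map_cons, List.prod_cons, ih]
    show FreeGroup.mk [(x, true)] * _ = _
    rw [FreeGroup.mul_mk]
    rfl

lemma lift_eq_prod (w : FreeMonoid (Fin 2)) :
    (FreeMonoid.lift (FreeGroup.of : Fin 2 → F2) w) =
      FreeGroup.mk (w.toList.map fun i => (i, true)) := by
  rw [FreeMonoid.lift_apply, prod_map_of]

lemma mem_Xpos_iff {x : F2} : x ∈ Xpos ↔ PosL x.toWord := by
  constructor
  · rintro ⟨w, rfl⟩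
    rw [lift_eq_prod, FreeGroup.toWord_mk, reduce_posL (posL_map _)]
    exact posL_map _
  · intro h
    refine ⟨FreeMonoid.ofList (x.toWord.map Prod.fst), ?_⟩
    rw [lift_eq_prod, FreeMonoid.toList_ofList]
    conv_lhs => rw [← FreeGroup.mk_toWord (x := x)]
    congr 1
    rw [List.map_map]
    symm
    refine List.map_congr_left ?_ |>.trans (List.map_id _)
    intro p hp
    have := h p hp
    simp [Function.comp, Prod.ext_iff, this]

lemma of0_pow (m : ℕ) :
    (FreeGroup.of (0 : Fin 2) : F2) ^ m = FreeGroup.mk (List.replicate m ((0 : Fin 2), true)) := by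
  induction m with
  | zero => simp [FreeGroup.one_eq_mk]
  | succ k ih =>
    rw [pow_succ, ih]
    show _ * FreeGroup.mk [((0:Fin 2), true)] = _
    rw [FreeGroup.mul_mk, List.replicate_succ']

lemma of0_pow_neg (m : ℕ) :
    ((FreeGroup.of (0 : Fin 2) : F2) ^ m)⁻¹ =
      FreeGroup.mk (List.replicate m ((0 : Fin 2), false)) := by
  rw [of0_pow, FreeGroup.inv_mk]
  congr 1
  simp [FreeGroup.invRev, List.map_replicate]

/-- reduce of `replicate m a⁻¹ ++ (positive)` keeps the same shape -/
lemma reduce_rep_pos (v : List (Fin 2 × Bool)) (hv : PosL v) (m : ℕ) :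
    ∃ m' l', reduce (List.replicate m ((0 : Fin 2), false) ++ v) =
      List.replicate m' ((0 : Fin 2), false) ++ l' ∧ PosL l' := by
  induction m with
  | zero => exact ⟨0, v, by simp [reduce_posL hv], hv⟩
  | succ k ih =>
    obtain ⟨m', l', heq, hl'⟩ := ih
    rw [List.replicate_succ, List.cons_append, reduce.cons, heq]
    cases m' with
    | succ m'' =>
      rw [List.replicate_succ]
      refine ⟨m'' + 2, l', ?_, hl'⟩
      simp only [List.cons_append]
      rw [if_neg (by rintro ⟨-, h⟩; simp at h)]
      rfl
    | zero =>
      simp only [List.replicate_zero, List.nil_append]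
      cases l' with
      | nil => exact ⟨1, [], rfl, posL_nil⟩
      | cons p t =>
        have hp : p.2 = true := hl' p (by simp)
        by_cases h0 : p.1 = 0
        · refine ⟨0, t, ?_, fun q hq => hl' q (by simp [hq])⟩
          simp only []
          rw [if_pos ⟨by simp [h0], by simp [hp]⟩]
          simp
        · refine ⟨1, p :: t, ?_, hl'⟩
          simp only []
          rw [if_neg (by rintro ⟨h1, -⟩; exact h0 (by simpa using h1.symm))]
          rfl

lemma Yset_toWord {y : F2} (hy : y ∈ Yset) :
    ∃ m l, y.toWord = List.replicate m ((0 : Fin 2), false) ++ l ∧ PosL l := by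
  obtain ⟨n, w, rfl⟩ := hy
  rcases le_or_gt 0 n with hn | hn
  · lift n to ℕ using hn
    rw [zpow_natCast, of0_pow, lift_eq_prod, FreeGroup.mul_mk, FreeGroup.toWord_mk]
    have hpos : PosL (List.replicate n ((0:Fin 2), true) ++ w.toList.map fun i => (i, true)) := by
      intro p hp
      rcases List.mem_append.1 hp with h | h
      · simpa using (List.eq_of_mem_replicate h) ▸ rfl
      · exact posL_map _ p h
    exact ⟨0, _, by rw [reduce_posL hpos]; rfl, hpos⟩
  · obtain ⟨m, rfl⟩ : ∃ m : ℕ, n = -(m : ℤ) :=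
      ⟨n.natAbs, by omega⟩
    rw [zpow_neg, zpow_natCast, of0_pow_neg, lift_eq_prod, FreeGroup.mul_mk,
      FreeGroup.toWord_mk]
    exact reduce_rep_pos _ (posL_map _) m

/-- reduce of positive ++ single negative letter -/
lemma reduce_pos_neg (g : Fin 2) (v : List (Fin 2 × Bool)) (hv : PosL v) :
    reduce (v ++ [(g, false)]) = v.dropLast ∨ reduce (v ++ [(g, false)]) = v ++ [(g, false)] := by
  induction v with
  | nil => right; rfl
  | cons x v' ih =>
    have hx : x.2 = true := hv x (by simp)
    have hv' : PosL v' := fun p hp => hv p (by simp [hp])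
    rw [List.cons_append, reduce.cons]
    rcases ih hv' with h | h
    · -- reduce (v' ++ [(g,false)]) = v'.dropLast
      have hv'ne : v' ≠ [] := by
        rintro rfl
        simp [reduce_singleton] at h
      rw [h]
      cases hd : v'.dropLast with
      | nil => left; simp [List.dropLast_cons_of_ne_nil hv'ne, hd]
      | cons q t =>
        have hq : q.2 = true := by
          have : q ∈ v'.dropLast := by rw [hd]; simp
          exact hv' q ((List.dropLast_sublist v').subset this)
        left
        simp only []
        rw [if_neg (by rintro ⟨-, h2⟩; rw [hx, hq] at h2; simp at h2)]
        rw [List.dropLast_cons_of_ne_nil hv'ne, hd]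
    · rw [h]
      cases v' with
      | nil =>
        simp only [List.nil_append]
        by_cases hg : x.1 = g
        · left
          rw [if_pos ⟨hg, by simp [hx]⟩]
          simp
        · right
          rw [if_neg (by rintro ⟨h1, -⟩; exact hg h1)]
      | cons q t =>
        have hq : q.2 = true := hv' q (by simp)
        right
        simp only [List.cons_append]
        rw [if_neg (by rintro ⟨-, h2⟩; rw [hx, hq] at h2; simp at h2)]

lemma ainv_toWord : ((FreeGroup.of (0 : Fin 2) : F2)⁻¹).toWord = [((0 : Fin 2), false)] := by
  show ((FreeGroup.mk [((0:Fin 2), true)])⁻¹).toWord = _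
  rw [FreeGroup.inv_mk]
  simp [FreeGroup.invRev, FreeGroup.toWord_mk]

lemma ainv_not_Xpos : ((FreeGroup.of (0 : Fin 2) : F2)⁻¹) ∉ Xpos := by
  intro h
  have := (mem_Xpos_iff.1 h) ((0:Fin 2), false) (by rw [ainv_toWord]; simp)
  simp at this

lemma ainv_mem_Yset : ((FreeGroup.of (0 : Fin 2) : F2)⁻¹) ∈ Yset :=
  ⟨-1, 1, by simp⟩

lemma one_mem_Xpos : (1 : F2) ∈ Xpos := ⟨1, by simp⟩

lemma Xpos_mul {x : F2} (hx : x ∈ Xpos) (g : Fin 2) : x * FreeGroup.of g ∈ Xpos := by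
  obtain ⟨w, rfl⟩ := hx
  exact ⟨w * FreeMonoid.of g, by simp⟩

lemma Yset_mul {y : F2} (hy : y ∈ Yset) (g : Fin 2) : y * FreeGroup.of g ∈ Yset := by
  obtain ⟨n, w, rfl⟩ := hy
  exact ⟨n, w * FreeMonoid.of g, by simp [mul_assoc]⟩

/-- THE key combinatorial lemma -/
lemma key {y : F2} (hy : y ∈ Yset) {g : Fin 2} (hx : y * FreeGroup.of g ∈ Xpos) :
    y ∈ Xpos ∨ (g = 0 ∧ y = (FreeGroup.of (0 : Fin 2) : F2)⁻¹) := by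
  obtain ⟨w, hw⟩ := hx
  have hyw : y = FreeGroup.mk ((w.toList.map fun i => (i, true)) ++ [(g, false)]) := by
    have : y = FreeMonoid.lift FreeGroup.of w * (FreeGroup.of g)⁻¹ := by
      rw [← hw]; group
    rw [this, lift_eq_prod]
    show _ * (FreeGroup.mk [(g, true)])⁻¹ = _
    rw [FreeGroup.inv_mk]
    rw [FreeGroup.mul_mk]
    rfl
  set v : List (Fin 2 × Bool) := w.toList.map fun i => (i, true) with hvdef
  have hv : PosL v := posL_map _
  have htw : y.toWord = reduce (v ++ [(g, false)]) := by
    rw [hyw, FreeGroup.toWord_mk]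
  rcases reduce_pos_neg g v hv with h | h
  · left
    rw [mem_Xpos_iff, htw, h]
    exact fun p hp => hv p ((List.dropLast_sublist v).subset hp)
  · -- y.toWord = v ++ [(g,false)]; use the Y structure
    obtain ⟨m, l₂, hy2, hl₂⟩ := Yset_toWord hy
    have E : v ++ [(g, false)] = List.replicate m ((0:Fin 2), false) ++ l₂ := by
      rw [← h, ← htw, hy2]
    -- count false letters
    have hcount : (v ++ [(g, false)]).countP (fun p => !p.2) =
        (List.replicate m ((0:Fin 2), false) ++ l₂).countP (fun p => !p.2) := by rw [E]
    rw [List.countP_append, List.countP_append] at hcount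
    have hv0 : v.countP (fun p => !p.2) = 0 := by
      rw [List.countP_eq_zero]
      intro p hp; simp [hv p hp]
    have hl0 : l₂.countP (fun p => !p.2) = 0 := by
      rw [List.countP_eq_zero]
      intro p hp; simp [hl₂ p hp]
    have hrep : (List.replicate m ((0:Fin 2), false)).countP (fun p => !p.2) = m := by
      simp [List.countP_replicate]
    have hone : ([((g : Fin 2), false)] : List (Fin 2 × Bool)).countP (fun p => !p.2) = 1 := by
      simp
    rw [hv0, hl0, hrep, hone] at hcount
    have hm : m = 1 := by omega
    subst hm
    simp only [List.replicate_one] at E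
    cases hvc : v with
    | cons p t =>
      exfalso
      rw [hvc] at E
      have hp0 : p = ((0:Fin 2), false) := by
        simpa using congrArg (fun l => l.head?) E
      have hp2 := hv p (by rw [hvc]; simp)
      rw [hp0] at hp2
      simp at hp2
    | nil =>
      rw [hvc] at E htw h
      simp only [List.nil_append, List.singleton_append] at E htw h
      obtain ⟨hp, hl2⟩ := List.cons_eq_cons.mp E
      have hg : g = 0 := congrArg Prod.fst hp
      right
      refine ⟨hg, ?_⟩
      have hW : y.toWord = [((0:Fin 2), false)] := by rw [htw, h, hp]
      have hmk := congrArg FreeGroup.mk hW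
      rw [FreeGroup.mk_toWord] at hmk
      rw [hmk]
      show _ = (FreeGroup.mk [((0:Fin 2), true)])⁻¹
      rw [FreeGroup.inv_mk]
      rfl

end Stmt15Aux


namespace Stmt15Aux

open ContinuousLinearMap

local notation "⟪" x ", " y "⟫" => @inner ℂ _ _ x y

lemma inner_delta_left (y : Yset) (f : l2Y) : ⟪δ y, f⟫ = f y := by
  rw [δ, lp.inner_single_left]
  simp [RCLike.inner_apply]

lemma delta_apply (y z : Yset) : (δ y) z = if z = y then 1 else 0 := by
  rw [δ, lp.single_apply]
  split_ifs with h
  · subst h; simp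
  · simp [h]

lemma inner_delta_delta (y z : Yset) : ⟪δ y, δ z⟫ = if y = z then 1 else 0 := by
  rw [inner_delta_left, delta_apply]

lemma vec_ext {u v : l2Y} (h : ∀ z, ⟪δ z, u⟫ = ⟪δ z, v⟫) : u = v := by
  apply lp.ext
  funext z
  have := h z
  rwa [inner_delta_left, inner_delta_left] at this

lemma dense_span_delta :
    Dense ((Submodule.span ℂ (Set.range δ) : Submodule ℂ l2Y) : Set l2Y) := by
  intro x
  have hs := lp.hasSum_single (E := fun _ : Yset => ℂ) (p := 2) (by norm_num) x
  refine mem_closure_of_tendsto hs ?_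
  filter_upwards with s
  refine Submodule.sum_mem _ fun i _ => ?_
  have h1 : lp.single 2 i (x i) = (x i) • δ i := by
    rw [δ, ← lp.single_smul, smul_eq_mul, mul_one]
  rw [h1]
  exact Submodule.smul_mem _ _ (Submodule.subset_span ⟨i, rfl⟩)

lemma clm_ext {A B : l2Y →L[ℂ] l2Y} (h : ∀ y, A (δ y) = B (δ y)) : A = B :=
  ContinuousLinearMap.ext_on dense_span_delta (by rintro x ⟨y, rfl⟩; exact h y)

lemma rank_smulRight (v u : l2Y) :
    Module.rank ℂ (LinearMap.range (((innerSL ℂ v).smulRight u : l2Y →L[ℂ] l2Y)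
      : l2Y →ₗ[ℂ] l2Y)) ≤ 1 := by
  have hle : LinearMap.range (((innerSL ℂ v).smulRight u : l2Y →L[ℂ] l2Y)
      : l2Y →ₗ[ℂ] l2Y) ≤ Submodule.span ℂ {u} := by
    rintro _ ⟨x, rfl⟩
    show ((innerSL ℂ v).smulRight u) x ∈ _
    rw [ContinuousLinearMap.smulRight_apply]
    exact Submodule.smul_mem _ _ (Submodule.mem_span_singleton_self u)
  refine (Submodule.rank_mono hle).trans ?_
  simpa using rank_span_le (R := ℂ) ({u} : Set l2Y)

lemma rank_zero_op :
    Module.rank ℂ (LinearMap.range (((0 : l2Y →L[ℂ] l2Y)) : l2Y →ₗ[ℂ] l2Y)) ≤ 1 := by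
  rw [ContinuousLinearMap.coe_zero, LinearMap.range_zero]
  simp [rank_bot]

lemma compact_from_C (T : ℂ →L[ℂ] l2Y) : IsCompactOperator ⇑T := by
  refine ⟨T '' Metric.closedBall 0 1, (isCompact_closedBall 0 1).image T.continuous, ?_⟩
  exact Filter.mem_of_superset (Metric.closedBall_mem_nhds 0 one_pos)
    (Set.subset_preimage_image _ _)

lemma compact_smulRight (v u : l2Y) :
    IsCompactOperator ⇑((innerSL ℂ v).smulRight u) := by
  have h : ⇑((innerSL ℂ v).smulRight u)
      = ⇑(ContinuousLinearMap.toSpanSingleton ℂ u) ∘ ⇑(innerSL ℂ v) := by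
    funext x
    simp [ContinuousLinearMap.toSpanSingleton_apply]
  rw [h]
  exact (compact_from_C _).comp_clm _

lemma adjoint_smulRight (v u : l2Y) :
    ContinuousLinearMap.adjoint ((innerSL ℂ v).smulRight u)
      = (innerSL ℂ u).smulRight v := by
  symm
  rw [ContinuousLinearMap.eq_adjoint_iff]
  intro x y
  simp only [ContinuousLinearMap.smulRight_apply, innerSL_apply_apply, inner_smul_left,
    inner_smul_right, inner_conj_symm]
  ring

end Stmt15Aux


set_option maxHeartbeats 2000000 in
open ContinuousLinearMap in
/-- Let `Q` be the orthogonal projection of `ℓ²(Y)` onto the closed span of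
`{δ_x : x ∈ X}`.  Then (1) for `T ∈ {S_a, S_b, S_a*, S_b*}` the commutator `QT − TQ`
has rank at most one, and (2) for any nonempty finite sequence `T₁, …, T_k` of such
operators, `Q T_k ⋯ T₁ Q − (Q T_k Q) ⋯ (Q T₁ Q)` is compact. -/
theorem stmt15 (Sa Sb : l2Y →L[ℂ] l2Y)
    (hSa : ∀ (y : Yset) (h : (y : F2) * FreeGroup.of 0 ∈ Yset),
      Sa (δ y) = δ ⟨(y : F2) * FreeGroup.of 0, h⟩)
    (hSb : ∀ (y : Yset) (h : (y : F2) * FreeGroup.of 1 ∈ Yset),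
      Sb (δ y) = δ ⟨(y : F2) * FreeGroup.of 1, h⟩)
    (Q : l2Y →L[ℂ] l2Y)
    (hQ : ∀ y : Yset,
      ((y : F2) ∈ Xpos → Q (δ y) = δ y) ∧ ((y : F2) ∉ Xpos → Q (δ y) = 0)) :
    (∀ T ∈ ({Sa, Sb, adjoint Sa, adjoint Sb} : Set (l2Y →L[ℂ] l2Y)),
      Module.rank ℂ (LinearMap.range ((Q * T - T * Q : l2Y →L[ℂ] l2Y)
        : l2Y →ₗ[ℂ] l2Y)) ≤ 1) ∧
    (∀ L : List (l2Y →L[ℂ] l2Y), L ≠ [] →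
      (∀ T ∈ L, T ∈ ({Sa, Sb, adjoint Sa, adjoint Sb} : Set (l2Y →L[ℂ] l2Y))) →
      IsCompactOperator
        ((Q * L.prod * Q - (L.map (fun T => Q * T * Q)).prod : l2Y →L[ℂ] l2Y)
          : l2Y → l2Y)) := by
  classical
  have hY1 : (1 : F2) ∈ Yset := ⟨0, 1, by simp⟩
  let e1 : Yset := ⟨(1 : F2), hY1⟩
  let an : Yset := ⟨((FreeGroup.of 0 : F2))⁻¹, Stmt15Aux.ainv_mem_Yset⟩
  let mulg : Yset → Fin 2 → Yset :=
    fun y g => ⟨(y : F2) * FreeGroup.of g, Stmt15Aux.Yset_mul y.2 g⟩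
  have hSa' : ∀ y : Yset, Sa (δ y) = δ (mulg y 0) := fun y => hSa y _
  have hSb' : ∀ y : Yset, Sb (δ y) = δ (mulg y 1) := fun y => hSb y _
  set R : l2Y →L[ℂ] l2Y := (innerSL ℂ (δ an)).smulRight (δ e1) with hRdef
  set R' : l2Y →L[ℂ] l2Y := (innerSL ℂ (δ e1)).smulRight (δ an) with hR'def
  have hQQ : Q * Q = Q := by
    apply Stmt15Aux.clm_ext
    intro y
    rw [ContinuousLinearMap.mul_apply]
    by_cases hy : (y : F2) ∈ Xpos
    · rw [(hQ y).1 hy, (hQ y).1 hy]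
    · rw [(hQ y).2 hy, map_zero]
  have hQSb : Q * Sb = Sb * Q := by
    apply Stmt15Aux.clm_ext
    intro y
    rw [ContinuousLinearMap.mul_apply, ContinuousLinearMap.mul_apply, hSb' y]
    by_cases hy : (y : F2) ∈ Xpos
    · have hyb : ((mulg y 1 : Yset) : F2) ∈ Xpos := Stmt15Aux.Xpos_mul hy 1
      rw [(hQ _).1 hyb, (hQ y).1 hy, hSb' y]
    · have hyb : ((mulg y 1 : Yset) : F2) ∉ Xpos := by
        intro hc
        rcases Stmt15Aux.key y.2 hc with h | ⟨h01, -⟩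
        · exact hy h
        · exact absurd h01 (by decide)
      rw [(hQ _).2 hyb, (hQ y).2 hy, map_zero]
  have hCa : Q * Sa - Sa * Q = R := by
    apply Stmt15Aux.clm_ext
    intro y
    rw [sub_apply, ContinuousLinearMap.mul_apply, ContinuousLinearMap.mul_apply, hSa' y]
    have hR : R (δ y) = (if an = y then 1 else 0 : ℂ) • δ e1 := by
      rw [hRdef, smulRight_apply, innerSL_apply_apply, Stmt15Aux.inner_delta_delta]
    rw [hR]
    by_cases hy : (y : F2) ∈ Xpos
    · have hya : ((mulg y 0 : Yset) : F2) ∈ Xpos := Stmt15Aux.Xpos_mul hy 0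
      have hne : ¬ (an = y) := by
        intro h
        apply Stmt15Aux.ainv_not_Xpos
        show ((an : Yset) : F2) ∈ Xpos
        rw [h]; exact hy
      rw [(hQ _).1 hya, (hQ y).1 hy, hSa' y, if_neg hne]
      simp
    · by_cases hya : ((mulg y 0 : Yset) : F2) ∈ Xpos
      · rcases Stmt15Aux.key y.2 hya with h | ⟨-, h2⟩
        · exact absurd h hy
        · have hay : an = y := Subtype.ext h2.symm
          have h1 : mulg y 0 = e1 := by
            apply Subtype.ext
            show (y : F2) * FreeGroup.of 0 = 1
            rw [h2, inv_mul_cancel]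
          rw [(hQ _).1 hya, (hQ y).2 hy, map_zero, if_pos hay, h1]
          simp
      · have hne : ¬ (an = y) := by
          intro h
          apply hya
          show (y : F2) * FreeGroup.of 0 ∈ Xpos
          have hxy : (y : F2) = ((FreeGroup.of 0 : F2))⁻¹ := by rw [← h]
          rw [hxy, inv_mul_cancel]
          exact Stmt15Aux.one_mem_Xpos
        rw [(hQ _).2 hya, (hQ y).2 hy, map_zero, if_neg hne]
        simp
  have hQadj : adjoint Q = Q := by
    apply Stmt15Aux.clm_ext
    intro y
    apply Stmt15Aux.vec_ext
    intro z
    rw [adjoint_inner_right]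
    by_cases hz : (z : F2) ∈ Xpos <;> by_cases hy : (y : F2) ∈ Xpos
    · rw [(hQ z).1 hz, (hQ y).1 hy]
    · rw [(hQ z).1 hz, (hQ y).2 hy, inner_zero_right, Stmt15Aux.inner_delta_delta,
        if_neg (fun h => hy (by rw [← h]; exact hz))]
    · rw [(hQ z).2 hz, (hQ y).1 hy, inner_zero_left, Stmt15Aux.inner_delta_delta,
        if_neg (fun h => hz (by rw [h]; exact hy))]
    · rw [(hQ z).2 hz, (hQ y).2 hy, inner_zero_left, inner_zero_right]
  have hadjR : adjoint R = R' := by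
    rw [hRdef, hR'def]; exact Stmt15Aux.adjoint_smulRight _ _
  have hCa' : Q * adjoint Sa - adjoint Sa * Q = -R' := by
    have h := congrArg (fun A : l2Y →L[ℂ] l2Y => adjoint A) hCa
    simp only [map_sub] at h
    rw [mul_def Q Sa, mul_def Sa Q, adjoint_comp, adjoint_comp, hQadj, hadjR] at h
    rw [← mul_def, ← mul_def] at h
    rw [← h, neg_sub]
  have hCb' : Q * adjoint Sb - adjoint Sb * Q = 0 := by
    have h := congrArg (fun A : l2Y →L[ℂ] l2Y => adjoint A) hQSb
    beta_reduce at h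
    rw [mul_def Q Sb, mul_def Sb Q, adjoint_comp, adjoint_comp, hQadj] at h
    rw [← mul_def, ← mul_def] at h
    rw [h, sub_self]
  constructor
  · intro T hT
    simp only [Set.mem_insert_iff, Set.mem_singleton_iff] at hT
    rcases hT with rfl | rfl | rfl | rfl
    · rw [hCa, hRdef]; exact Stmt15Aux.rank_smulRight _ _
    · rw [hQSb, sub_self]; exact Stmt15Aux.rank_zero_op
    · rw [hCa', ContinuousLinearMap.coe_neg, LinearMap.range_neg, hR'def]
      exact Stmt15Aux.rank_smulRight _ _
    · rw [hCb']; exact Stmt15Aux.rank_zero_op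
  · have hcomp : ∀ T ∈ ({Sa, Sb, adjoint Sa, adjoint Sb} : Set (l2Y →L[ℂ] l2Y)),
        IsCompactOperator ⇑(Q * T - T * Q) := by
      intro T hT
      simp only [Set.mem_insert_iff, Set.mem_singleton_iff] at hT
      rcases hT with rfl | rfl | rfl | rfl
      · rw [hCa, hRdef]; exact Stmt15Aux.compact_smulRight _ _
      · rw [hQSb, sub_self, coe_zero']; exact isCompactOperator_zero
      · rw [hCa', coe_neg', hR'def]
        exact (Stmt15Aux.compact_smulRight _ _).neg
      · rw [hCb', coe_zero']; exact isCompactOperator_zero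
    intro L
    induction L with
    | nil => intro h; exact absurd rfl h
    | cons T L' ih =>
      intro _ hmem
      by_cases hL' : L' = []
      · subst hL'
        simp only [List.prod_cons, List.prod_nil, List.map_cons, List.map_nil, mul_one]
        rw [sub_self, coe_zero']
        exact isCompactOperator_zero
      · have hmem' : ∀ S ∈ L', S ∈ ({Sa, Sb, adjoint Sa, adjoint Sb}
            : Set (l2Y →L[ℂ] l2Y)) := fun S hS => hmem S (List.mem_cons_of_mem _ hS)
        have hK' := ih hL' hmem'
        have hC := hcomp T (hmem T (List.mem_cons_self))
        set P' := L'.prod with hP'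
        set M' := (L'.map (fun S => Q * S * Q)).prod with hM'
        have hM : Q * M' = M' := by
          obtain ⟨T', L'', rfl⟩ := List.exists_cons_of_ne_nil hL'
          rw [hM']
          simp only [List.map_cons, List.prod_cons]
          rw [← mul_assoc]
          congr 1
          rw [← mul_assoc, ← mul_assoc, hQQ]
        have keyid : Q * (T :: L').prod * Q - ((T :: L').map (fun S => Q * S * Q)).prod
            = T * (Q * P' * Q - M') + (Q * T - T * Q) * (P' * Q - M') := by
          simp only [List.prod_cons, List.map_cons, ← hP', ← hM']
          have h1 : T * Q * M' = T * M' := by rw [mul_assoc, hM]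
          have h2 : Q * T * M' = Q * T * Q * M' := by
            conv_rhs => rw [mul_assoc (Q * T) Q M', hM]
          have expand : T * (Q * P' * Q - M') + (Q * T - T * Q) * (P' * Q - M')
              = Q * (T * P') * Q - (T * M' + (Q * T * M' - T * Q * M')) := by
            noncomm_ring
          rw [expand, h1, h2]
          noncomm_ring
        rw [keyid]
        have hA : IsCompactOperator ⇑(T * (Q * P' * Q - M')) := by
          have hco : ⇑(T * (Q * P' * Q - M')) = ⇑T ∘ ⇑(Q * P' * Q - M') := rfl
          rw [hco]
          exact hK'.continuous_comp T.continuous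
        have hB : IsCompactOperator ⇑((Q * T - T * Q) * (P' * Q - M')) := by
          have hco : ⇑((Q * T - T * Q) * (P' * Q - M'))
              = ⇑(Q * T - T * Q) ∘ ⇑(P' * Q - M') := rfl
          rw [hco]
          exact hC.comp_clm _
        have hco : ⇑(T * (Q * P' * Q - M') + (Q * T - T * Q) * (P' * Q - M'))
            = ⇑(T * (Q * P' * Q - M')) + ⇑((Q * T - T * Q) * (P' * Q - M')) := rfl
        rw [hco]
        exact hA.add hB
end
end

section
/- The operators t_a and t_b on ℓ²(Y) defined by t_a = S_a³(S_a*)² + S_bS_a(S_a*)²S_b* + S_aS_bS_a*S_b*S_a*S_b* + S_b²(S_b*)²S_a*S_b* + S_a²S_bS_a(S_b*)² + S_a²S_b²S_b*S_a* and t_b = S_b²S_a(S_b*)² + S_aS_bS_a*S_b*S_a* + S_a²S_a*(S_b*)²S_a* + S_bS_a(S_b*)³S_a* + S_b³S_aS_a*S_b* + S_b⁴(S_a*)² are both unitary operators. -/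
noncomputable section

namespace Stmt18Aux
open FreeGroup List

-- invRev helpers
lemma invRev_cons (x : (Fin 2) × Bool) (l : List ((Fin 2) × Bool)) :
    invRev (x :: l) = invRev l ++ [(x.1, !x.2)] := by
  simp [invRev]

lemma invRev_concat (x : (Fin 2) × Bool) (l : List ((Fin 2) × Bool)) :
    invRev (l ++ [x]) = (x.1, !x.2) :: invRev l := by
  simp [invRev]

lemma invRev_replicate (k : ℕ) (x : (Fin 2) × Bool) :
    invRev (List.replicate k x) = List.replicate k (x.1, !x.2) := by
  simp [invRev, List.map_replicate, List.reverse_replicate]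

lemma of_eq_mk (i : Fin 2) : FreeGroup.of i = FreeGroup.mk [(i, true)] := rfl

lemma inv_of_eq_mk (i : Fin 2) : (FreeGroup.of i)⁻¹ = FreeGroup.mk [(i, false)] := by
  rw [of_eq_mk, inv_mk]; rfl

lemma toWord_letter_mul (i : Fin 2) (tf : Bool) (x : F2) :
    toWord (FreeGroup.mk [(i, tf)] * x) =
      List.casesOn (toWord x) [(i, tf)] fun hd tl =>
        if (i, tf).1 = hd.1 ∧ (i, tf).2 = !hd.2 then tl else (i, tf) :: hd :: tl := by
  conv_lhs => rw [← mk_toWord (x := x)]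
  rw [mul_mk, toWord_mk]
  have : ([(i, tf)] ++ toWord x) = (i, tf) :: toWord x := rfl
  rw [this, reduce.cons, reduce_toWord]

lemma toWord_mul_letter_no_cancel (x : F2) (i : Fin 2) (tf : Bool)
    (h : toWord x = [] ∨ ∃ M j c, toWord x = M ++ [(j, c)] ∧ (j, c) ≠ (i, !tf)) :
    toWord (x * FreeGroup.mk [(i, tf)]) = toWord x ++ [(i, tf)] := by
  have key : x * FreeGroup.mk [(i, tf)] = (FreeGroup.mk [(i, !tf)] * x⁻¹)⁻¹ := by
    rw [mul_inv_rev, inv_inv, inv_mk]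
    congr 1
    simp [invRev]
  rw [key, toWord_inv, toWord_letter_mul, toWord_inv]
  rcases h with h | ⟨M, j, c, hM, hne⟩
  · rw [h]
    simp [invRev]
  · rw [hM, invRev_concat]
    have hcond : ¬(i = j ∧ (!tf) = !(!c)) := by
      rintro ⟨rfl, h2⟩
      apply hne
      simp only [Bool.not_not] at h2
      rw [show c = !tf by rw [← h2]]
    simp only [List.casesOn]
    rw [if_neg hcond]
    rw [invRev_cons, invRev_cons, invRev_invRev]
    simp [List.append_assoc]

lemma toWord_mul_letter_cancel (x : F2) (i : Fin 2) (tf : Bool) (M : List ((Fin 2) × Bool))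
    (hM : toWord x = M ++ [(i, !tf)]) :
    toWord (x * FreeGroup.mk [(i, tf)]) = M := by
  have key : x * FreeGroup.mk [(i, tf)] = (FreeGroup.mk [(i, !tf)] * x⁻¹)⁻¹ := by
    rw [mul_inv_rev, inv_inv, inv_mk]
    congr 1
    simp [invRev]
  rw [key, toWord_inv, toWord_letter_mul, toWord_inv, hM, invRev_concat]
  simp [invRev_invRev]

end Stmt18Aux

namespace Stmt18Aux
open FreeGroup List

abbrev ga : F2 := FreeGroup.of 0

def pos (l : List (Fin 2)) : F2 := FreeGroup.mk (l.map (fun i => (i, true)))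

lemma pos_nil : pos [] = 1 := by rw [pos, List.map_nil, one_eq_mk]

lemma pos_concat (l : List (Fin 2)) (i : Fin 2) :
    pos (l ++ [i]) = pos l * FreeGroup.of i := by
  rw [pos, pos, List.map_append, ← mul_mk, of_eq_mk]
  rfl

lemma pos_cons (i : Fin 2) (l : List (Fin 2)) :
    pos (i :: l) = FreeGroup.of i * pos l := by
  rw [pos, pos, List.map_cons, of_eq_mk, mul_mk]
  rfl

lemma lift_eq_pos (w : FreeMonoid (Fin 2)) :
    FreeMonoid.lift FreeGroup.of w = pos (FreeMonoid.toList w) := by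
  induction w using FreeMonoid.recOn with
  | one => rw [_root_.map_one]; exact pos_nil.symm
  | of_mul i w ih =>
      rw [_root_.map_mul, FreeMonoid.lift_eval_of, ih]
      rw [show FreeMonoid.toList (FreeMonoid.of i * w) = i :: FreeMonoid.toList w from rfl]
      rw [pos_cons]

lemma apow_eq_mk (n : ℕ) : (ga ^ n : F2) = FreeGroup.mk (List.replicate n ((0 : Fin 2), true)) := by
  rw [← mk_toWord (x := ga ^ n), toWord_of_pow]

lemma aneg_eq_mk (k : ℕ) : (ga ^ (-(k : ℤ)) : F2) = FreeGroup.mk (List.replicate k ((0 : Fin 2), false)) := by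
  rw [zpow_neg, zpow_natCast, apow_eq_mk, inv_mk, invRev_replicate]
  rfl

lemma toWord_apow (n : ℕ) : toWord (ga ^ n : F2) = List.replicate n ((0 : Fin 2), true) :=
  toWord_of_pow _ _

lemma toWord_aneg (k : ℕ) : toWord (ga ^ (-(k : ℤ)) : F2) = List.replicate k ((0 : Fin 2), false) := by
  rw [aneg_eq_mk, toWord_mk, reduce_replicate]

/-- Shape of reduced words of elements of `Y`. -/
lemma sh_toWord {x : F2} (hx : x ∈ Yset) :
    ∃ (k : ℕ) (p : List (Fin 2)),
      toWord x = List.replicate k ((0 : Fin 2), false) ++ p.map (fun i => (i, true)) := by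
  obtain ⟨n, w, rfl⟩ := hx
  rw [lift_eq_pos]
  induction (FreeMonoid.toList w) using List.reverseRecOn with
  | nil =>
      rw [pos_nil, mul_one]
      rcases n with m | m
      · exact ⟨0, List.replicate m 0, by
          simp [Int.ofNat_eq_natCast, zpow_natCast, toWord_of_pow, List.map_replicate]⟩
      · refine ⟨m + 1, [], ?_⟩
        have : (Int.negSucc m) = -((m+1 : ℕ) : ℤ) := by simp [Int.negSucc_eq]
        rw [this, toWord_aneg, List.map_nil, List.append_nil]
  | append_singleton l i ih =>
      obtain ⟨k, p, hw⟩ := ih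
      rw [pos_concat, ← mul_assoc]
      set x := ga ^ n * pos l with hx
      rcases List.eq_nil_or_concat p with rfl | ⟨q, j, rfl⟩
      · rw [List.map_nil, List.append_nil] at hw
        rcases k with _ | k'
        · -- toWord x = []
          refine ⟨0, [i], ?_⟩
          rw [of_eq_mk, toWord_mul_letter_no_cancel x i true (Or.inl (by simp [hw]))]
          simp [hw]
        · -- toWord x = replicate (k'+1) (0, false)
          by_cases hi : i = 0
          · subst hi
            refine ⟨k', [], ?_⟩
            rw [of_eq_mk, toWord_mul_letter_cancel x 0 true (List.replicate k' ((0:Fin 2), false))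
              (by rw [hw, List.replicate_succ' (n := k')] ; rfl)]
            simp
          · refine ⟨k' + 1, [i], ?_⟩
            rw [of_eq_mk, toWord_mul_letter_no_cancel x i true
              (Or.inr ⟨List.replicate k' ((0:Fin 2), false), 0, false,
                by rw [hw, List.replicate_succ' (n := k')], by simp [Ne.symm hi]⟩)]
            rw [hw]; simp
      · refine ⟨k, q ++ [j] ++ [i], ?_⟩
        rw [of_eq_mk, toWord_mul_letter_no_cancel x i true
          (Or.inr ⟨List.replicate k ((0:Fin 2), false) ++ q.map (fun i => (i, true)), j, true,
            by rw [hw]; simp, by simp⟩)]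
        rw [hw]; simp

end Stmt18Aux

namespace Stmt18Aux
open FreeGroup List

lemma mem_mul_of {y : F2} (hy : y ∈ Yset) (i : Fin 2) : y * FreeGroup.of i ∈ Yset := by
  obtain ⟨n, w, rfl⟩ := hy
  exact ⟨n, w * FreeMonoid.of i, by
    rw [_root_.map_mul, FreeMonoid.lift_eval_of, mul_assoc]⟩

lemma shape_mul_of {y : F2} (hy : y ∈ Yset) (i : Fin 2) :
    toWord (y * FreeGroup.of i) = toWord y ++ [(i, true)] ∨
      (i = 0 ∧ ∃ k : ℕ, toWord y = List.replicate (k + 1) ((0 : Fin 2), false) ∧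
        toWord (y * FreeGroup.of i) = List.replicate k ((0 : Fin 2), false)) := by
  obtain ⟨k, p, hw⟩ := sh_toWord hy
  rcases List.eq_nil_or_concat p with rfl | ⟨q, j, rfl⟩
  · rw [List.map_nil, List.append_nil] at hw
    rcases k with _ | k'
    · left
      rw [of_eq_mk, toWord_mul_letter_no_cancel y i true (Or.inl (by simp [hw]))]
    · by_cases hi : i = 0
      · subst hi
        right
        exact ⟨rfl, k', hw, by
          rw [of_eq_mk, toWord_mul_letter_cancel y 0 true (List.replicate k' ((0:Fin 2), false))
            (by rw [hw, List.replicate_succ' (n := k')]; rfl)]⟩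
      · left
        rw [of_eq_mk, toWord_mul_letter_no_cancel y i true
          (Or.inr ⟨List.replicate k' ((0:Fin 2), false), 0, false,
            by rw [hw, List.replicate_succ' (n := k')], by simp [Ne.symm hi]⟩)]
  · left
    rw [of_eq_mk, toWord_mul_letter_no_cancel y i true
      (Or.inr ⟨List.replicate k ((0:Fin 2), false) ++ q.map (fun i => (i, true)), j, true,
        by rw [hw]; simp, by simp⟩)]

lemma mul_a_ne_mul_b {y z : F2} (hy : y ∈ Yset) (hz : z ∈ Yset) :
    y * FreeGroup.of 0 ≠ z * FreeGroup.of 1 := by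
  intro heq
  have hz1 : toWord (z * FreeGroup.of 1) = toWord z ++ [((1 : Fin 2), true)] := by
    rcases shape_mul_of hz 1 with h | ⟨h01, _⟩
    · exact h
    · exact absurd h01 (by decide)
  have := congrArg toWord heq
  rcases shape_mul_of hy 0 with h | ⟨_, k, _, hcan⟩
  · rw [h, hz1] at this
    have := congrArg List.getLast? this
    rw [List.getLast?_concat, List.getLast?_concat] at this
    simp at this
  · rw [hcan, hz1] at this
    rcases k with _ | k'
    · simp at this
    · have := congrArg List.getLast? this
      rw [List.replicate_succ', List.getLast?_concat, List.getLast?_concat] at this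
      simp at this

lemma exists_pred {y : F2} (hy : y ∈ Yset) :
    y * (FreeGroup.of 0)⁻¹ ∈ Yset ∨ y * (FreeGroup.of 1)⁻¹ ∈ Yset := by
  obtain ⟨k, p, hw⟩ := sh_toWord hy
  have hy' : y = FreeGroup.mk (toWord y) := (mk_toWord).symm
  rcases List.eq_nil_or_concat p with rfl | ⟨q, j, rfl⟩
  · rw [List.map_nil, List.append_nil] at hw
    left
    have hyk : y = ga ^ (-(k : ℤ)) := by rw [hy', hw, aneg_eq_mk]
    refine ⟨-(k : ℤ) - 1, 1, ?_⟩
    rw [_root_.map_one, mul_one, zpow_sub_one, hyk]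
  · have hsplit : y = ga ^ (-(k : ℤ)) * pos q * FreeGroup.of j := by
      rw [hy', hw, List.concat_eq_append, List.map_append]
      rw [aneg_eq_mk, pos, of_eq_mk, mul_mk, mul_mk]
      simp
    have hmem : y * (FreeGroup.of j)⁻¹ ∈ Yset := by
      rw [hsplit, mul_inv_cancel_right]
      exact ⟨-(k : ℤ), FreeMonoid.ofList q, by rw [lift_eq_pos, FreeMonoid.toList_ofList]⟩
    fin_cases j
    · exact Or.inl hmem
    · exact Or.inr hmem

end Stmt18Aux

namespace Stmt18Aux
open ContinuousLinearMap

local notation "⟪" x ", " y "⟫" => @inner ℂ _ _ x y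

lemma delta_apply (y w : Yset) : (δ y : ∀ _ : Yset, ℂ) w = if w = y then 1 else 0 := by
  rw [δ]
  by_cases h : w = y
  · subst h; simp [lp.single_apply_self]
  · simp [lp.single_apply_ne 2 y _ h, h]

lemma inner_delta (y : Yset) (f : l2Y) : ⟪δ y, f⟫ = f y := by
  rw [δ, lp.inner_single_left]
  simp

lemma ext_delta {T U : l2Y →L[ℂ] l2Y} (h : ∀ y, T (δ y) = U (δ y)) : T = U := by
  refine ContinuousLinearMap.ext fun f => ?_
  have hs : HasSum (fun y : Yset => lp.single 2 y (f y)) f :=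
    lp.hasSum_single (by norm_num) f
  have hsingle : ∀ y : Yset, lp.single 2 y (f y) = f y • δ y := by
    intro y
    rw [δ, ← lp.single_smul]
    norm_num
  have hT : HasSum (fun y : Yset => f y • T (δ y)) (T f) := by
    simpa [hsingle, map_smul] using hs.mapL T
  have hU : HasSum (fun y : Yset => f y • U (δ y)) (U f) := by
    simpa [hsingle, map_smul] using hs.mapL U
  simp_rw [h] at hT
  exact hT.unique hU

lemma star_apply_delta {S : l2Y →L[ℂ] l2Y} {g : Yset → Yset}
    (hS : ∀ y, S (δ y) = δ (g y)) (hinj : Function.Injective g) {z y : Yset}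
    (hzy : g z = y) : (star S) (δ y) = δ z := by
  apply lp.ext
  funext w
  have h1 : ((star S) (δ y) : ∀ _ : Yset, ℂ) w = ⟪δ w, (star S) (δ y)⟫ :=
    (inner_delta w _).symm
  rw [h1, star_eq_adjoint, adjoint_inner_right, hS, inner_delta, delta_apply,
    delta_apply]
  by_cases hw : w = z
  · subst hw; rw [if_pos hzy, if_pos rfl]
  · rw [if_neg (fun hc => hw (hinj (hc.trans hzy.symm))), if_neg hw]

lemma star_apply_delta_zero {S : l2Y →L[ℂ] l2Y} {g : Yset → Yset}
    (hS : ∀ y, S (δ y) = δ (g y)) {y : Yset}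
    (hy : ∀ z, g z ≠ y) : (star S) (δ y) = 0 := by
  apply lp.ext
  funext w
  have h1 : ((star S) (δ y) : ∀ _ : Yset, ℂ) w = ⟪δ w, (star S) (δ y)⟫ :=
    (inner_delta w _).symm
  rw [h1, star_eq_adjoint, adjoint_inner_right, hS, inner_delta, delta_apply,
    if_neg (hy w)]
  rfl

end Stmt18Aux


section Cuntz
variable {M : Type*} [Ring M] [StarRing M] (A B : M)
variable (r1 : star A * A = 1) (r2 : star B * B = 1)
variable (r3 : star A * B = 0) (r4 : star B * A = 0)
variable (r5 : A * star A + B * star B = 1)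

include r1 r2 r3 r4 r5 in
lemma cuntz_ta_left :
    star (A ^ 3 * (star A) ^ 2
      + B * A * (star A) ^ 2 * star B
      + A * B * star A * star B * star A * star B
      + B ^ 2 * (star B) ^ 2 * star A * star B
      + A ^ 2 * B * A * (star B) ^ 2
      + A ^ 2 * B ^ 2 * star B * star A) *
    (A ^ 3 * (star A) ^ 2
      + B * A * (star A) ^ 2 * star B
      + A * B * star A * star B * star A * star B
      + B ^ 2 * (star B) ^ 2 * star A * star B
      + A ^ 2 * B * A * (star B) ^ 2
      + A ^ 2 * B ^ 2 * star B * star A) = 1 := by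
  have pw2 : ∀ x : M, x ^ 2 = x * x := fun x => sq x
  have pw3 : ∀ x : M, x ^ 3 = x * (x * x) := fun x => by rw [pow_succ, sq x, mul_assoc]
  have pw4 : ∀ x : M, x ^ 4 = x * (x * (x * x)) := fun x => by
    rw [pow_succ, pw3 x, mul_assoc, mul_assoc]
  have c1 : ∀ x : M, star A * (A * x) = x := fun x => by rw [← mul_assoc, r1, one_mul]
  have c2 : ∀ x : M, star B * (B * x) = x := fun x => by rw [← mul_assoc, r2, one_mul]
  have c3 : ∀ x : M, star A * (B * x) = 0 := fun x => by rw [← mul_assoc, r3, zero_mul]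
  have c4 : ∀ x : M, star B * (A * x) = 0 := fun x => by rw [← mul_assoc, r4, zero_mul]
  simp only [star_add, star_mul, star_pow, star_star, pw2, pw3, pw4, mul_add, add_mul,
    mul_assoc, c1, c2, c3, c4, r1, r2, r3, r4, one_mul, mul_one, zero_mul, mul_zero,
    add_zero, zero_add]
  have hh : ∀ v : M, A * (star A * v) + B * (star B * v) = v := fun v => by
    rw [← mul_assoc, ← mul_assoc, ← add_mul, r5, one_mul]
  have ka : A * (A * (star A * (star A))) + A * (B * (star B * (star A))) = A * (star A) := by
    rw [← mul_add, hh]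
  have kb : B * (A * (star A * (star B))) + B * (B * (star B * (star B))) = B * (star B) := by
    rw [← mul_add, hh]
  have kab : B * (A * (A * (star A * (star A * (star B))))) + B * (A * (B * (star B * (star A * (star B))))) = B * (A * (star A * (star B))) := by
    rw [← mul_add, ← mul_add, hh]
  have kbab : B * (A * (B * (A * (star A * (star B * (star A * (star B))))))) + B * (A * (B * (B * (star B * (star B * (star A * (star B))))))) = B * (A * (B * (star B * (star A * (star B))))) := by
    rw [← mul_add, ← mul_add, ← mul_add, hh]
  rw [← r5, ← ka, ← kb, ← kab, ← kbab]
  abel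


include r1 r2 r3 r4 r5 in
lemma cuntz_ta_right :
    (A ^ 3 * (star A) ^ 2
      + B * A * (star A) ^ 2 * star B
      + A * B * star A * star B * star A * star B
      + B ^ 2 * (star B) ^ 2 * star A * star B
      + A ^ 2 * B * A * (star B) ^ 2
      + A ^ 2 * B ^ 2 * star B * star A) *
    (star (A ^ 3 * (star A) ^ 2
      + B * A * (star A) ^ 2 * star B
      + A * B * star A * star B * star A * star B
      + B ^ 2 * (star B) ^ 2 * star A * star B
      + A ^ 2 * B * A * (star B) ^ 2
      + A ^ 2 * B ^ 2 * star B * star A)) = 1 := by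
  have pw2 : ∀ x : M, x ^ 2 = x * x := fun x => sq x
  have pw3 : ∀ x : M, x ^ 3 = x * (x * x) := fun x => by rw [pow_succ, sq x, mul_assoc]
  have pw4 : ∀ x : M, x ^ 4 = x * (x * (x * x)) := fun x => by
    rw [pow_succ, pw3 x, mul_assoc, mul_assoc]
  have c1 : ∀ x : M, star A * (A * x) = x := fun x => by rw [← mul_assoc, r1, one_mul]
  have c2 : ∀ x : M, star B * (B * x) = x := fun x => by rw [← mul_assoc, r2, one_mul]
  have c3 : ∀ x : M, star A * (B * x) = 0 := fun x => by rw [← mul_assoc, r3, zero_mul]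
  have c4 : ∀ x : M, star B * (A * x) = 0 := fun x => by rw [← mul_assoc, r4, zero_mul]
  simp only [star_add, star_mul, star_pow, star_star, pw2, pw3, pw4, mul_add, add_mul,
    mul_assoc, c1, c2, c3, c4, r1, r2, r3, r4, one_mul, mul_one, zero_mul, mul_zero,
    add_zero, zero_add]
  have hh : ∀ v : M, A * (star A * v) + B * (star B * v) = v := fun v => by
    rw [← mul_assoc, ← mul_assoc, ← add_mul, r5, one_mul]
  have ka : A * (A * (star A * (star A))) + A * (B * (star B * (star A))) = A * (star A) := by
    rw [← mul_add, hh]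
  have kb : B * (A * (star A * (star B))) + B * (B * (star B * (star B))) = B * (star B) := by
    rw [← mul_add, hh]
  have kaa : A * (A * (A * (star A * (star A * (star A))))) + A * (A * (B * (star B * (star A * (star A))))) = A * (A * (star A * (star A))) := by
    rw [← mul_add, ← mul_add, hh]
  have kbaa : A * (A * (B * (A * (star A * (star B * (star A * (star A))))))) + A * (A * (B * (B * (star B * (star B * (star A * (star A))))))) = A * (A * (B * (star B * (star A * (star A))))) := by
    rw [← mul_add, ← mul_add, ← mul_add, hh]
  rw [← r5, ← ka, ← kb, ← kaa, ← kbaa]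
  abel



include r1 r2 r3 r4 r5 in
lemma cuntz_tb_left :
    (star (B ^ 2 * A * (star B) ^ 2
      + A * B * star A * star B * star A
      + A ^ 2 * star A * (star B) ^ 2 * star A
      + B * A * (star B) ^ 3 * star A
      + B ^ 3 * A * star A * star B
      + B ^ 4 * (star A) ^ 2)) *
    (B ^ 2 * A * (star B) ^ 2
      + A * B * star A * star B * star A
      + A ^ 2 * star A * (star B) ^ 2 * star A
      + B * A * (star B) ^ 3 * star A
      + B ^ 3 * A * star A * star B
      + B ^ 4 * (star A) ^ 2) = 1 := by
  have pw2 : ∀ x : M, x ^ 2 = x * x := fun x => sq x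
  have pw3 : ∀ x : M, x ^ 3 = x * (x * x) := fun x => by rw [pow_succ, sq x, mul_assoc]
  have pw4 : ∀ x : M, x ^ 4 = x * (x * (x * x)) := fun x => by
    rw [pow_succ, pw3 x, mul_assoc, mul_assoc]
  have c1 : ∀ x : M, star A * (A * x) = x := fun x => by rw [← mul_assoc, r1, one_mul]
  have c2 : ∀ x : M, star B * (B * x) = x := fun x => by rw [← mul_assoc, r2, one_mul]
  have c3 : ∀ x : M, star A * (B * x) = 0 := fun x => by rw [← mul_assoc, r3, zero_mul]
  have c4 : ∀ x : M, star B * (A * x) = 0 := fun x => by rw [← mul_assoc, r4, zero_mul]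
  simp only [star_add, star_mul, star_pow, star_star, pw2, pw3, pw4, mul_add, add_mul,
    mul_assoc, c1, c2, c3, c4, r1, r2, r3, r4, one_mul, mul_one, zero_mul, mul_zero,
    add_zero, zero_add]
  have hh : ∀ v : M, A * (star A * v) + B * (star B * v) = v := fun v => by
    rw [← mul_assoc, ← mul_assoc, ← add_mul, r5, one_mul]
  have ka : A * (A * (star A * (star A))) + A * (B * (star B * (star A))) = A * (star A) := by
    rw [← mul_add, hh]
  have kb : B * (A * (star A * (star B))) + B * (B * (star B * (star B))) = B * (star B) := by
    rw [← mul_add, hh]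
  have kba : A * (B * (A * (star A * (star B * (star A))))) + A * (B * (B * (star B * (star B * (star A))))) = A * (B * (star B * (star A))) := by
    rw [← mul_add, ← mul_add, hh]
  have kbba : A * (B * (B * (A * (star A * (star B * (star B * (star A))))))) + A * (B * (B * (B * (star B * (star B * (star B * (star A))))))) = A * (B * (B * (star B * (star B * (star A))))) := by
    rw [← mul_add, ← mul_add, ← mul_add, hh]
  rw [← r5, ← ka, ← kb, ← kba, ← kbba]
  abel



include r1 r2 r3 r4 r5 in
lemma cuntz_tb_right :
    (B ^ 2 * A * (star B) ^ 2
      + A * B * star A * star B * star A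
      + A ^ 2 * star A * (star B) ^ 2 * star A
      + B * A * (star B) ^ 3 * star A
      + B ^ 3 * A * star A * star B
      + B ^ 4 * (star A) ^ 2) *
    (star (B ^ 2 * A * (star B) ^ 2
      + A * B * star A * star B * star A
      + A ^ 2 * star A * (star B) ^ 2 * star A
      + B * A * (star B) ^ 3 * star A
      + B ^ 3 * A * star A * star B
      + B ^ 4 * (star A) ^ 2)) = 1 := by
  have pw2 : ∀ x : M, x ^ 2 = x * x := fun x => sq x
  have pw3 : ∀ x : M, x ^ 3 = x * (x * x) := fun x => by rw [pow_succ, sq x, mul_assoc]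
  have pw4 : ∀ x : M, x ^ 4 = x * (x * (x * x)) := fun x => by
    rw [pow_succ, pw3 x, mul_assoc, mul_assoc]
  have c1 : ∀ x : M, star A * (A * x) = x := fun x => by rw [← mul_assoc, r1, one_mul]
  have c2 : ∀ x : M, star B * (B * x) = x := fun x => by rw [← mul_assoc, r2, one_mul]
  have c3 : ∀ x : M, star A * (B * x) = 0 := fun x => by rw [← mul_assoc, r3, zero_mul]
  have c4 : ∀ x : M, star B * (A * x) = 0 := fun x => by rw [← mul_assoc, r4, zero_mul]
  simp only [star_add, star_mul, star_pow, star_star, pw2, pw3, pw4, mul_add, add_mul,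
    mul_assoc, c1, c2, c3, c4, r1, r2, r3, r4, one_mul, mul_one, zero_mul, mul_zero,
    add_zero, zero_add]
  have hh : ∀ v : M, A * (star A * v) + B * (star B * v) = v := fun v => by
    rw [← mul_assoc, ← mul_assoc, ← add_mul, r5, one_mul]
  have ka : A * (A * (star A * (star A))) + A * (B * (star B * (star A))) = A * (star A) := by
    rw [← mul_add, hh]
  have kb : B * (A * (star A * (star B))) + B * (B * (star B * (star B))) = B * (star B) := by
    rw [← mul_add, hh]
  have kbb : B * (B * (A * (star A * (star B * (star B))))) + B * (B * (B * (star B * (star B * (star B))))) = B * (B * (star B * (star B))) := by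
    rw [← mul_add, ← mul_add, hh]
  have kbbb : B * (B * (B * (A * (star A * (star B * (star B * (star B))))))) + B * (B * (B * (B * (star B * (star B * (star B * (star B))))))) = B * (B * (B * (star B * (star B * (star B))))) := by
    rw [← mul_add, ← mul_add, ← mul_add, hh]
  rw [← r5, ← ka, ← kb, ← kbb, ← kbbb]
  abel



end Cuntz


set_option maxHeartbeats 2000000 in
open ContinuousLinearMap in
/-- The operators
`t_a = S_a³(S_a*)² + S_bS_a(S_a*)²S_b* + S_aS_bS_a*S_b*S_a*S_b* + S_b²(S_b*)²S_a*S_b*`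
` + S_a²S_bS_a(S_b*)² + S_a²S_b²S_b*S_a*` and
`t_b = S_b²S_a(S_b*)² + S_aS_bS_a*S_b*S_a* + S_a²S_a*(S_b*)²S_a* + S_bS_a(S_b*)³S_a*`
` + S_b³S_aS_a*S_b* + S_b⁴(S_a*)²` on `ℓ²(Y)` are both unitary. -/
theorem stmt18 (Sa Sb : l2Y →L[ℂ] l2Y)
    (hSa : ∀ (y : Yset) (h : (y : F2) * FreeGroup.of 0 ∈ Yset),
      Sa (δ y) = δ ⟨(y : F2) * FreeGroup.of 0, h⟩)
    (hSb : ∀ (y : Yset) (h : (y : F2) * FreeGroup.of 1 ∈ Yset),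
      Sb (δ y) = δ ⟨(y : F2) * FreeGroup.of 1, h⟩) :
    (Sa ^ 3 * (star Sa) ^ 2
      + Sb * Sa * (star Sa) ^ 2 * star Sb
      + Sa * Sb * star Sa * star Sb * star Sa * star Sb
      + Sb ^ 2 * (star Sb) ^ 2 * star Sa * star Sb
      + Sa ^ 2 * Sb * Sa * (star Sb) ^ 2
      + Sa ^ 2 * Sb ^ 2 * star Sb * star Sa) ∈ unitary (l2Y →L[ℂ] l2Y) ∧
    (Sb ^ 2 * Sa * (star Sb) ^ 2
      + Sa * Sb * star Sa * star Sb * star Sa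
      + Sa ^ 2 * star Sa * (star Sb) ^ 2 * star Sa
      + Sb * Sa * (star Sb) ^ 3 * star Sa
      + Sb ^ 3 * Sa * star Sa * star Sb
      + Sb ^ 4 * (star Sa) ^ 2) ∈ unitary (l2Y →L[ℂ] l2Y) := by
  classical
  set gA : Yset → Yset := fun y => ⟨(y : F2) * FreeGroup.of 0, Stmt18Aux.mem_mul_of y.2 0⟩ with hgA
  set gB : Yset → Yset := fun y => ⟨(y : F2) * FreeGroup.of 1, Stmt18Aux.mem_mul_of y.2 1⟩ with hgB
  have hA : ∀ y, Sa (δ y) = δ (gA y) := fun y => hSa y _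
  have hB : ∀ y, Sb (δ y) = δ (gB y) := fun y => hSb y _
  have hinjA : Function.Injective gA := fun y z h =>
    Subtype.ext (mul_right_cancel (congrArg Subtype.val h))
  have hinjB : Function.Injective gB := fun y z h =>
    Subtype.ext (mul_right_cancel (congrArg Subtype.val h))
  have r1 : star Sa * Sa = 1 := Stmt18Aux.ext_delta fun y => by
    rw [mul_apply_eq_comp, hA, Stmt18Aux.star_apply_delta hA hinjA rfl, one_apply_eq_self]
  have r2 : star Sb * Sb = 1 := Stmt18Aux.ext_delta fun y => by
    rw [mul_apply_eq_comp, hB, Stmt18Aux.star_apply_delta hB hinjB rfl, one_apply_eq_self]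
  have r3 : star Sa * Sb = 0 := Stmt18Aux.ext_delta fun y => by
    rw [mul_apply_eq_comp, hB, Stmt18Aux.star_apply_delta_zero hA
      (fun z hc => Stmt18Aux.mul_a_ne_mul_b z.2 y.2 (congrArg Subtype.val hc)), zero_apply]
  have r4 : star Sb * Sa = 0 := Stmt18Aux.ext_delta fun y => by
    rw [mul_apply_eq_comp, hA, Stmt18Aux.star_apply_delta_zero hB
      (fun z hc => Stmt18Aux.mul_a_ne_mul_b y.2 z.2 (congrArg Subtype.val hc).symm), zero_apply]
  have r5 : Sa * star Sa + Sb * star Sb = 1 := Stmt18Aux.ext_delta fun y => by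
    rw [add_apply, mul_apply_eq_comp, mul_apply_eq_comp, one_apply_eq_self]
    rcases Stmt18Aux.exists_pred y.2 with h | h
    · have hz : gA ⟨(y : F2) * (FreeGroup.of 0)⁻¹, h⟩ = y :=
        Subtype.ext (inv_mul_cancel_right _ _)
      rw [Stmt18Aux.star_apply_delta hA hinjA hz, hA,
        Stmt18Aux.star_apply_delta_zero hB (fun z hc =>
          Stmt18Aux.mul_a_ne_mul_b (Subtype.prop ⟨(y : F2) * (FreeGroup.of 0)⁻¹, h⟩) z.2
            ((congrArg Subtype.val hz).trans (congrArg Subtype.val hc).symm)),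
        map_zero, add_zero]
      exact congrArg δ hz
    · have hz : gB ⟨(y : F2) * (FreeGroup.of 1)⁻¹, h⟩ = y :=
        Subtype.ext (inv_mul_cancel_right _ _)
      rw [Stmt18Aux.star_apply_delta hB hinjB hz, hB,
        Stmt18Aux.star_apply_delta_zero hA (fun z hc =>
          Stmt18Aux.mul_a_ne_mul_b z.2 (Subtype.prop ⟨(y : F2) * (FreeGroup.of 1)⁻¹, h⟩)
            ((congrArg Subtype.val hc).trans (congrArg Subtype.val hz).symm)),
        map_zero, zero_add]
      exact congrArg δ hz
  -- algebra part
  have pw2 : ∀ x : l2Y →L[ℂ] l2Y, x ^ 2 = x * x := fun x => sq x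
  have pw3 : ∀ x : l2Y →L[ℂ] l2Y, x ^ 3 = x * (x * x) := fun x => by
    rw [pow_succ, sq x, mul_assoc]
  have pw4 : ∀ x : l2Y →L[ℂ] l2Y, x ^ 4 = x * (x * (x * x)) := fun x => by
    rw [pow_succ, pw3 x, mul_assoc, mul_assoc]
  have c1 : ∀ x : l2Y →L[ℂ] l2Y, star Sa * (Sa * x) = x := fun x => by
    rw [← mul_assoc, r1, one_mul]
  have c2 : ∀ x : l2Y →L[ℂ] l2Y, star Sb * (Sb * x) = x := fun x => by
    rw [← mul_assoc, r2, one_mul]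
  have c3 : ∀ x : l2Y →L[ℂ] l2Y, star Sa * (Sb * x) = 0 := fun x => by
    rw [← mul_assoc, r3, zero_mul]
  have c4 : ∀ x : l2Y →L[ℂ] l2Y, star Sb * (Sa * x) = 0 := fun x => by
    rw [← mul_assoc, r4, zero_mul]
  have hh : ∀ v : l2Y →L[ℂ] l2Y, Sa * (star Sa * v) + Sb * (star Sb * v) = v := fun v => by
    rw [← mul_assoc, ← mul_assoc, ← add_mul, r5, one_mul]
  constructor
  · rw [Unitary.mem_iff]
    exact ⟨cuntz_ta_left Sa Sb r1 r2 r3 r4 r5, cuntz_ta_right Sa Sb r1 r2 r3 r4 r5⟩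
  · rw [Unitary.mem_iff]
    exact ⟨cuntz_tb_left Sa Sb r1 r2 r3 r4 r5, cuntz_tb_right Sa Sb r1 r2 r3 r4 r5⟩
end
end
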